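/- For $m \ge 0$, the residue identity $\operatorname{Res}_{t=0}\left[\frac{dt}{t^{m+1}(1-4t)^{3/2}}\ln\left(\frac{2}{1+\sqrt{1-4t}}\right)\right] = \operatorname{Res}_{v=0}\left[\frac{(1+v)^{2m+2}\ln(1+v)}{v^{m+1}(1-v)^2}\,dv\right]$ holds, i.e., the $m$-th Taylor coefficient of $(1-4t)^{-3/2}\ln(2/(1+\sqrt{1-4t}))$ equals the coefficient of $v^m$ in $\frac{(1+v)^{2m+2}\ln(1+v)}{(1-v)^2}$. -/

import Mathlib

open Filter Finset Asymptotics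

lemma mono_isBigO {a b : ℕ} (h : a ≤ b) : (fun v : ℝ => v ^ b) =O[nhds 0] fun v => v ^ a := by
  have he : (fun v : ℝ => v ^ b) = fun v => v ^ a * v ^ (b - a) := by
    funext v; rw [← pow_add]; congr 1; omega
  rw [he]
  have h2 : (fun v : ℝ => v ^ (b - a)) =O[nhds 0] (fun _ => (1 : ℝ)) :=
    ((continuous_pow (b - a)).tendsto 0).isBigO_one ℝ
  simpa using (isBigO_refl (fun v : ℝ => v ^ a) (nhds 0)).mul h2

lemma const_term_zero (N k : ℕ) (hN : 0 < N) (b : ℕ → ℝ)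
    (h : (fun v : ℝ => ∑ i ∈ range N, b i * v ^ i) =O[nhdsWithin (0:ℝ) {(0:ℝ)}ᶜ]
      fun v => v ^ (k + 1)) : b 0 = 0 := by
  have hv : Tendsto (fun v : ℝ => v ^ (k + 1)) (nhdsWithin (0:ℝ) {(0:ℝ)}ᶜ) (nhds 0) :=
    tendsto_nhdsWithin_of_tendsto_nhds (by simpa using (continuous_pow (k+1)).tendsto (0:ℝ))
  have h1 : Tendsto (fun v : ℝ => ∑ i ∈ range N, b i * v ^ i)
      (nhdsWithin (0:ℝ) {(0:ℝ)}ᶜ) (nhds 0) :=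
    (isLittleO_one_iff ℝ).1 (h.trans_isLittleO ((isLittleO_one_iff ℝ).2 hv))
  have h2 : Tendsto (fun v : ℝ => ∑ i ∈ range N, b i * v ^ i)
      (nhdsWithin (0:ℝ) {(0:ℝ)}ᶜ) (nhds (b 0)) := by
    have hc : Continuous (fun v : ℝ => ∑ i ∈ range N, b i * v ^ i) := by
      continuity
    have := (hc.tendsto 0).mono_left (nhdsWithin_le_nhds (s := {(0:ℝ)}ᶜ))
    convert this using 2
    rw [Finset.sum_eq_single_of_mem 0 (Finset.mem_range.2 hN)]
    · simp
    · intro i _ hi; simp [zero_pow hi]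
  exact tendsto_nhds_unique h2 h1

lemma coeffs_zero : ∀ (m : ℕ) (b : ℕ → ℝ),
    ((fun v : ℝ => ∑ i ∈ range (m + 1), b i * v ^ i) =O[nhdsWithin (0:ℝ) {(0:ℝ)}ᶜ]
      fun v => v ^ (m + 1)) → ∀ i ≤ m, b i = 0 := by
  intro m
  induction m with
  | zero =>
    intro b h i hi
    interval_cases i
    exact const_term_zero 1 0 one_pos b h
  | succ m ih =>
    intro b h i hi
    have hb0 : b 0 = 0 := const_term_zero (m + 2) (m + 1) (by omega) b h
    -- factor out v
    have hT : (fun v : ℝ => ∑ i ∈ range (m + 1), b (i + 1) * v ^ i)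
        =O[nhdsWithin (0:ℝ) {(0:ℝ)}ᶜ] fun v => v ^ (m + 1) := by
      rw [isBigO_iff] at h ⊢
      obtain ⟨C, hC⟩ := h
      refine ⟨C, ?_⟩
      filter_upwards [hC, self_mem_nhdsWithin] with v hv hv0
      have hv0' : v ≠ 0 := hv0
      have hfac : ∑ i ∈ range (m + 2), b i * v ^ i
          = v * ∑ i ∈ range (m + 1), b (i + 1) * v ^ i := by
        rw [Finset.sum_range_succ' (fun i => b i * v ^ i) (m + 1)]
        rw [Finset.mul_sum]
        simp [hb0]
        ring_nf
        exact Finset.sum_congr rfl fun i _ => by ring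
      rw [hfac] at hv
      have : ‖v‖ * ‖∑ i ∈ range (m + 1), b (i + 1) * v ^ i‖ ≤ C * (‖v‖ * ‖v ^ (m + 1)‖) := by
        calc ‖v‖ * ‖∑ i ∈ range (m + 1), b (i + 1) * v ^ i‖
            = ‖v * ∑ i ∈ range (m + 1), b (i + 1) * v ^ i‖ := (norm_mul _ _).symm
          _ ≤ C * ‖v ^ (m + 2)‖ := hv
          _ = C * (‖v‖ * ‖v ^ (m + 1)‖) := by rw [← norm_mul]; ring_nf
      have hvpos : 0 < ‖v‖ := norm_pos_iff.2 hv0'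
      nlinarith [norm_nonneg (∑ i ∈ range (m + 1), b (i + 1) * v ^ i), norm_nonneg (v ^ (m+1))]
    rcases Nat.eq_zero_or_pos i with rfl | hipos
    · exact hb0
    · obtain ⟨j, rfl⟩ := Nat.exists_eq_add_of_lt hipos
      simpa using ih (fun i => b (i + 1)) hT j (by omega)

lemma coeff_extract {g : ℝ → ℝ} {q : FormalMultilinearSeries ℝ ℝ ℝ}
    (hq : HasFPowerSeriesAt g q 0) (m : ℕ) (c : ℕ → ℝ)
    (h : (fun v => g v - ∑ i ∈ range (m + 1), c i * v ^ i) =O[nhds (0:ℝ)]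
      fun v => v ^ (m + 1)) : ∀ i ≤ m, q.coeff i = c i := by
  have h2 := hq.isBigO_sub_partialSum_pow (m + 1)
  have hps : ∀ y : ℝ, q.partialSum (m + 1) y = ∑ i ∈ range (m + 1), q.coeff i * y ^ i := by
    intro y
    unfold FormalMultilinearSeries.partialSum
    refine Finset.sum_congr rfl fun k _ => ?_
    rw [q.apply_eq_pow_smul_coeff]
    simp [mul_comm]
  have h2' : (fun v : ℝ => g v - ∑ i ∈ range (m + 1), q.coeff i * v ^ i)
      =O[nhds (0:ℝ)] fun v => v ^ (m + 1) := by
    have hnorm : (fun v : ℝ => ‖v‖ ^ (m + 1)) =O[nhds (0:ℝ)] fun v => v ^ (m + 1) := by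
      rw [isBigO_iff]
      exact ⟨1, Eventually.of_forall fun v => by
        simp [abs_pow]⟩
    refine ((h2.congr' ?_ (EventuallyEq.refl _ _)).trans hnorm)
    exact Eventually.of_forall fun v => by simp only [zero_add, hps]
  have hsub : (fun v : ℝ => ∑ i ∈ range (m + 1), (c i - q.coeff i) * v ^ i)
      =O[nhdsWithin (0:ℝ) {(0:ℝ)}ᶜ] fun v => v ^ (m + 1) := by
    have := (h2'.sub h).mono (nhdsWithin_le_nhds (s := {(0:ℝ)}ᶜ))
    refine this.congr' ?_ (EventuallyEq.refl _ _)
    refine Eventually.of_forall fun v => ?_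
    simp only
    have he : ∑ i ∈ range (m + 1), (c i - q.coeff i) * v ^ i
        = (∑ i ∈ range (m + 1), c i * v ^ i) - ∑ i ∈ range (m + 1), q.coeff i * v ^ i := by
      rw [← Finset.sum_sub_distrib]
      exact Finset.sum_congr rfl fun i _ => by ring
    rw [he]; ring
  intro i hi
  have h0 : c i - q.coeff i = 0 := coeffs_zero m (fun i => c i - q.coeff i) hsub i hi
  linarith

/-- expansion of (1-v)(1+v)^N -/
lemma expandPoly (N : ℕ) (v : ℝ) : (1 - v) * (1 + v) ^ N
    = ∑ i ∈ range (N + 2),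
        ((N.choose i : ℝ) - if i = 0 then 0 else (N.choose (i - 1) : ℝ)) * v ^ i := by
  have hbin : (1 + v) ^ N = ∑ i ∈ range (N + 1), (N.choose i : ℝ) * v ^ i := by
    rw [add_comm (1:ℝ) v, add_pow]
    exact Finset.sum_congr rfl fun i _ => by ring
  have hbin2 : (1 + v) ^ N = ∑ i ∈ range (N + 2), (N.choose i : ℝ) * v ^ i := by
    rw [Finset.sum_range_succ, Nat.choose_eq_zero_of_lt (by omega)]
    simpa using hbin
  have hshift : v * (1 + v) ^ N
      = ∑ i ∈ range (N + 2), (if i = 0 then 0 else (N.choose (i - 1) : ℝ)) * v ^ i := by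
    rw [Finset.sum_range_succ' (fun i => (if i = 0 then 0 else (N.choose (i - 1) : ℝ)) * v ^ i) (N + 1)]
    simp only [Nat.add_eq_zero, and_false, if_false, Nat.add_sub_cancel, if_true]
    rw [hbin, Finset.mul_sum]
    simp
    exact Finset.sum_congr rfl fun i _ => by ring
  have : (1 - v) * (1 + v) ^ N = (1 + v) ^ N - v * (1 + v) ^ N := by ring
  rw [this, hshift, hbin2, ← Finset.sum_sub_distrib]
  exact Finset.sum_congr rfl fun i _ => by ring

/-- coefficients of (1-v)(1+v)^(2n-1) -/
noncomputable def Dc (n j : ℕ) : ℝ :=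
  ((2 * n - 1).choose j : ℝ) - if j = 0 then 0 else ((2 * n - 1).choose (j - 1) : ℝ)

lemma Dc_zero_zero : Dc 0 0 = 1 := by simp [Dc]

lemma Dc_diag {n : ℕ} (hn : 1 ≤ n) : Dc n n = 0 := by
  have h1 : 2 * n - 1 - n = n - 1 := by omega
  have h2 : n ≤ 2 * n - 1 := by omega
  have := Nat.choose_symm h2
  rw [h1] at this
  simp only [Dc, if_neg (by omega : ¬ n = 0), ← this]
  ring

lemma expandDc {n : ℕ} (hn : 1 ≤ n) (v : ℝ) :
    (1 - v) * (1 + v) ^ (2 * n - 1) = ∑ j ∈ range (2 * n + 1), Dc n j * v ^ j := by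
  have := expandPoly (2 * n - 1) v
  have h2 : 2 * n - 1 + 2 = 2 * n + 1 := by omega
  rw [h2] at this
  exact this

noncomputable def Fm (m : ℕ) (p : FormalMultilinearSeries ℝ ℝ ℝ) : ℝ → ℝ := fun v =>
  (∑ k ∈ range m, p.coeff k * (v ^ k * ((1 - v) * (1 + v) ^ (2 * (m - k) - 1))))
    + p.coeff m * v ^ m

noncomputable def cm (m : ℕ) (p : FormalMultilinearSeries ℝ ℝ ℝ) : ℕ → ℝ := fun i =>
  ∑ k ∈ range (m + 1), if k ≤ i then p.coeff k * Dc (m - k) (i - k) else 0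

lemma cm_sum (m : ℕ) (p : FormalMultilinearSeries ℝ ℝ ℝ) (v : ℝ) :
    ∑ i ∈ range (m + 1), cm m p i * v ^ i
      = ∑ k ∈ range (m + 1), p.coeff k * ∑ j ∈ range (m + 1 - k), Dc (m - k) j * v ^ (k + j) := by
  unfold cm
  simp only [Finset.sum_mul, ite_mul, zero_mul]
  rw [Finset.sum_comm]
  refine Finset.sum_congr rfl fun k hk => ?_
  rw [Finset.mul_sum]
  have hk' : k ≤ m + 1 := by
    have := Finset.mem_range.1 hk; omega
  have hsplit : ∑ i ∈ range (m + 1),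
        (if k ≤ i then p.coeff k * Dc (m - k) (i - k) * v ^ i else 0)
      = ∑ i ∈ Finset.Ico k (m + 1), (if k ≤ i then p.coeff k * Dc (m - k) (i - k) * v ^ i else 0) := by
    rw [Finset.range_eq_Ico, ← Finset.sum_Ico_consecutive _ (Nat.zero_le k) hk']
    have : ∑ i ∈ Finset.Ico 0 k, (if k ≤ i then p.coeff k * Dc (m - k) (i - k) * v ^ i else 0) = 0 := by
      refine Finset.sum_eq_zero fun i hi => ?_
      rw [if_neg]
      have := (Finset.mem_Ico.1 hi).2; omega
    rw [this, zero_add]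
  rw [hsplit, Finset.sum_Ico_eq_sum_range]
  refine Finset.sum_congr rfl fun j hj => ?_
  rw [if_pos (Nat.le_add_right k j)]
  simp [Nat.add_sub_cancel_left]
  ring

lemma cm_top (m : ℕ) (p : FormalMultilinearSeries ℝ ℝ ℝ) : cm m p m = p.coeff m := by
  unfold cm
  rw [Finset.sum_range_succ]
  have h1 : ∀ k ∈ range m, (if k ≤ m then p.coeff k * Dc (m - k) (m - k) else 0) = 0 := by
    intro k hk
    have hkm := Finset.mem_range.1 hk
    rw [if_pos (by omega), Dc_diag (by omega : 1 ≤ m - k), mul_zero]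
  rw [Finset.sum_eq_zero h1, zero_add, if_pos le_rfl]
  simp [Dc_zero_zero]

lemma hB (m : ℕ) (p : FormalMultilinearSeries ℝ ℝ ℝ) :
    (fun v => Fm m p v - ∑ i ∈ range (m + 1), cm m p i * v ^ i)
      =O[nhds (0:ℝ)] fun v => v ^ (m + 1) := by
  have heq : ∀ v : ℝ, Fm m p v - ∑ i ∈ range (m + 1), cm m p i * v ^ i
      = ∑ k ∈ range m, p.coeff k *
          ∑ j ∈ Finset.Ico (m + 1 - k) (2 * (m - k) + 1), Dc (m - k) j * v ^ (k + j) := by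
    intro v
    rw [cm_sum, Finset.sum_range_succ]
    have hlast : p.coeff m * ∑ j ∈ range (m + 1 - m), Dc (m - m) j * v ^ (m + j)
        = p.coeff m * v ^ m := by
      rw [show m + 1 - m = 1 from by omega]
      simp [Nat.sub_self, Dc_zero_zero]
    rw [hlast]
    unfold Fm
    have hstep : ∑ k ∈ range m, p.coeff k * (v ^ k * ((1 - v) * (1 + v) ^ (2 * (m - k) - 1)))
          + p.coeff m * v ^ m
        - ((∑ k ∈ range m, p.coeff k * ∑ j ∈ range (m + 1 - k), Dc (m - k) j * v ^ (k + j))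
          + p.coeff m * v ^ m)
      = ∑ k ∈ range m, (p.coeff k * (v ^ k * ((1 - v) * (1 + v) ^ (2 * (m - k) - 1)))
          - p.coeff k * ∑ j ∈ range (m + 1 - k), Dc (m - k) j * v ^ (k + j)) := by
      rw [Finset.sum_sub_distrib]; ring
    rw [hstep]
    refine Finset.sum_congr rfl fun k hk => ?_
    have hkm := Finset.mem_range.1 hk
    have hn : 1 ≤ m - k := by omega
    have hA : v ^ k * ((1 - v) * (1 + v) ^ (2 * (m - k) - 1))
        = ∑ j ∈ range (2 * (m - k) + 1), Dc (m - k) j * v ^ (k + j) := by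
      rw [expandDc hn, Finset.mul_sum]
      exact Finset.sum_congr rfl fun j _ => by rw [pow_add]; ring
    rw [hA, ← mul_sub]
    congr 1
    rw [Finset.range_eq_Ico,
      ← Finset.sum_Ico_consecutive (fun j => Dc (m - k) j * v ^ (k + j))
        (Nat.zero_le (m + 1 - k)) (by omega : m + 1 - k ≤ 2 * (m - k) + 1)]
    rw [Finset.range_eq_Ico]
    simp only [add_sub_cancel_left]
  refine (IsBigO.sum fun k hk => ?_).congr' (Eventually.of_forall fun v => by simp only [Finset.sum_apply]; exact (heq v).symm)
      (EventuallyEq.refl _ _)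
  have hkm := Finset.mem_range.1 hk
  refine IsBigO.const_mul_left ?_ _
  refine IsBigO.fun_sum fun j hj => ?_
  have hj' := Finset.mem_Ico.1 hj
  refine IsBigO.const_mul_left ?_ _
  exact mono_isBigO (by omega)

lemma partialSum_eq (p : FormalMultilinearSeries ℝ ℝ ℝ) (n : ℕ) (y : ℝ) :
    p.partialSum n y = ∑ i ∈ range n, p.coeff i * y ^ i := by
  unfold FormalMultilinearSeries.partialSum
  refine Finset.sum_congr rfl fun k _ => ?_
  rw [p.apply_eq_pow_smul_coeff]
  simp [mul_comm]


/-- The `m`-th Taylor coefficient at `0` of `(1-4t)^{-3/2} ln(2/(1+√(1-4t)))` equals the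
coefficient of `v^m` in `(1+v)^{2m+2} ln(1+v)/(1-v)^2` (the substitution `t = v/(1+v)^2`). -/
theorem stmt16 (m : ℕ) (f g : ℝ → ℝ) (p q : FormalMultilinearSeries ℝ ℝ ℝ)
    (hf : ∀ᶠ t in nhds (0 : ℝ),
      f t = (1 - 4 * t) ^ (-(3 : ℝ) / 2) * Real.log (2 / (1 + Real.sqrt (1 - 4 * t))))
    (hg : ∀ᶠ v in nhds (0 : ℝ),
      g v = (1 + v) ^ (2 * m + 2) * Real.log (1 + v) / (1 - v) ^ 2)
    (hp : HasFPowerSeriesAt f p 0) (hq : HasFPowerSeriesAt g q 0) :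
    p.coeff m = q.coeff m := by
  classical
  set φ : ℝ → ℝ := fun v => v / (1 + v) ^ 2 with hφdef
  set ψ : ℝ → ℝ := fun v => (1 - v) * (1 + v) ^ (2 * m + 2) / (1 + v) ^ 3 with hψdef
  have hφ0 : Filter.Tendsto φ (nhds 0) (nhds 0) := by
    have hc : ContinuousAt φ 0 := by
      apply ContinuousAt.div
      · fun_prop
      · fun_prop
      · norm_num
    have h0 : φ 0 = 0 := by simp [hφdef]
    simpa [h0] using hc.tendsto
  have hev_half : ∀ᶠ v : ℝ in nhds 0, |v| < 1/2 := by
    filter_upwards [Metric.ball_mem_nhds (0:ℝ) (by norm_num : (0:ℝ) < 1/2)] with v hv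
    simpa [Real.dist_eq] using hv
  have hfφ : ∀ᶠ v : ℝ in nhds 0, f (φ v)
      = (1 - 4 * φ v) ^ (-(3 : ℝ) / 2) * Real.log (2 / (1 + Real.sqrt (1 - 4 * φ v))) :=
    hφ0.eventually hf
  have hkey : ∀ᶠ v : ℝ in nhds 0,
      g v - Fm m p v
        = (f (φ v) - ∑ k ∈ range (m + 1), p.coeff k * (φ v) ^ k) * ψ v
          + p.coeff m * v ^ m * (-2 * v / (1 + v)) := by
    filter_upwards [hev_half, hfφ, hg] with v hv hfv hgv
    obtain ⟨hv1, hv2⟩ := abs_lt.1 hv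
    have h1 : (0:ℝ) < 1 + v := by linarith
    have h2 : (0:ℝ) < 1 - v := by linarith
    have h1' : (1:ℝ) + v ≠ 0 := ne_of_gt h1
    have h2' : (1:ℝ) - v ≠ 0 := ne_of_gt h2
    have ht : 1 - 4 * φ v = ((1 - v)/(1 + v))^2 := by
      simp only [hφdef]
      field_simp
      ring
    have hs : Real.sqrt (1 - 4 * φ v) = (1 - v)/(1 + v) := by
      rw [ht, Real.sqrt_sq (by positivity)]
    have hlg : 2 / (1 + Real.sqrt (1 - 4 * φ v)) = 1 + v := by
      rw [hs]
      rw [show 1 + (1 - v)/(1 + v) = 2/(1 + v) from by field_simp; ring]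
      rw [div_div_eq_mul_div]
      field_simp
    have hx : (0:ℝ) < (1 - v)/(1 + v) := by positivity
    have hr : (1 - 4 * φ v) ^ (-(3:ℝ)/2) = ((1 + v)/(1 - v))^3 := by
      rw [ht]
      rw [show ((1 - v)/(1 + v))^2 = ((1 - v)/(1 + v)) ^ ((2:ℕ):ℝ) from
        (Real.rpow_natCast _ 2).symm]
      rw [← Real.rpow_mul hx.le]
      rw [show ((2:ℕ):ℝ) * (-(3:ℝ)/2) = -((3:ℕ):ℝ) from by norm_num]
      rw [Real.rpow_neg hx.le, Real.rpow_natCast]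
      rw [← inv_pow, inv_div]
    -- g v = f (φ v) * ψ v
    have hgψ : g v = f (φ v) * ψ v := by
      rw [hfv, hr, hlg, hgv, hψdef]
      field_simp
    -- sum formula
    have hsum : (∑ k ∈ range (m + 1), p.coeff k * (φ v) ^ k) * ψ v
        = Fm m p v + p.coeff m * v ^ m * (-2 * v / (1 + v)) := by
      rw [Finset.sum_mul, Finset.sum_range_succ]
      unfold Fm
      have hterm : ∀ k ∈ range m, p.coeff k * (φ v) ^ k * ψ v
          = p.coeff k * (v ^ k * ((1 - v) * (1 + v) ^ (2 * (m - k) - 1))) := by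
        intro k hk
        have hkm := Finset.mem_range.1 hk
        obtain ⟨n, hn⟩ : ∃ n, m - k = n + 1 := ⟨m - k - 1, by omega⟩
        rw [show 2 * (m - k) - 1 = 2 * n + 1 from by omega]
        simp only [hφdef, hψdef]
        rw [show 2 * m + 2 = 2 * k + (2 * n + 4) from by omega]
        rw [div_pow, ← pow_mul, pow_add]
        field_simp
        ring
      rw [Finset.sum_congr rfl hterm]
      have htop : p.coeff m * (φ v) ^ m * ψ v
          = p.coeff m * v ^ m + p.coeff m * v ^ m * (-2 * v / (1 + v)) := by
        simp only [hφdef, hψdef]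
        rw [show 2 * m + 2 = 2 * m + 2 from rfl]
        rw [div_pow, ← pow_mul, pow_add, pow_mul]
        field_simp
        ring
      rw [htop]
      ring
    rw [hgψ, sub_mul, hsum]
    ring
  -- Big-O estimates
  have hφO : φ =O[nhds (0:ℝ)] fun v => v := by
    rw [Asymptotics.isBigO_iff]
    refine ⟨4, ?_⟩
    filter_upwards [hev_half] with v hv
    obtain ⟨hv1, hv2⟩ := abs_lt.1 hv
    have h1 : (1/2:ℝ) < 1 + v := by linarith
    have h4 : (1/4:ℝ) ≤ (1 + v)^2 := by nlinarith
    simp only [hφdef, Real.norm_eq_abs, abs_div, abs_pow]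
    rw [div_le_iff₀ (by positivity)]
    have : |1 + v| = 1 + v := abs_of_pos (by linarith)
    rw [this]
    nlinarith [abs_nonneg v]
  have hψO : ψ =O[nhds (0:ℝ)] (fun _ => (1:ℝ)) := by
    have hc : ContinuousAt ψ 0 := by
      apply ContinuousAt.div
      · fun_prop
      · fun_prop
      · norm_num
    exact hc.tendsto.isBigO_one ℝ
  have hφpow : (fun v : ℝ => ‖φ v‖ ^ (m + 1)) =O[nhds (0:ℝ)] fun v => v ^ (m + 1) := by
    have h := hφO.pow (m + 1)
    have he : (fun v : ℝ => ‖φ v‖ ^ (m + 1)) = fun v => ‖φ v ^ (m + 1)‖ := by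
      funext v; rw [norm_pow]
    rw [he]
    exact (Asymptotics.isBigO_norm_left).2 h
  have hO1 : (fun v : ℝ => (f (φ v) - ∑ k ∈ range (m + 1), p.coeff k * (φ v) ^ k) * ψ v)
      =O[nhds (0:ℝ)] fun v => v ^ (m + 1) := by
    have hcomp := (hp.isBigO_sub_partialSum_pow (m + 1)).comp_tendsto hφ0
    have hcomp' : (fun v : ℝ => f (φ v) - ∑ k ∈ range (m + 1), p.coeff k * (φ v) ^ k)
        =O[nhds (0:ℝ)] fun v => ‖φ v‖ ^ (m + 1) := by
      refine hcomp.congr' ?_ (EventuallyEq.refl _ _)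
      exact Eventually.of_forall fun v => by simp only [Function.comp, zero_add, partialSum_eq]
    have := (hcomp'.trans hφpow).mul hψO
    simpa using this
  have hO2 : (fun v : ℝ => p.coeff m * v ^ m * (-2 * v / (1 + v)))
      =O[nhds (0:ℝ)] fun v => v ^ (m + 1) := by
    have hc : ContinuousAt (fun v : ℝ => p.coeff m * (-2 / (1 + v))) 0 := by
      apply ContinuousAt.mul
      · fun_prop
      · apply ContinuousAt.div
        · fun_prop
        · fun_prop
        · norm_num
    have hb : (fun v : ℝ => p.coeff m * (-2 / (1 + v))) =O[nhds (0:ℝ)] (fun _ => (1:ℝ)) :=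
      hc.tendsto.isBigO_one ℝ
    have h := (isBigO_refl (fun v : ℝ => v ^ (m + 1)) (nhds 0)).mul hb
    refine (h.congr' ?_ ?_).mono le_rfl
    · exact Eventually.of_forall fun v => by
        simp only [div_eq_mul_inv, pow_succ]; ring
    · exact Eventually.of_forall fun v => by simp
  have hkey' : (fun v : ℝ => (f (φ v) - ∑ k ∈ range (m + 1), p.coeff k * (φ v) ^ k) * ψ v
      + p.coeff m * v ^ m * (-2 * v / (1 + v))) =ᶠ[nhds (0:ℝ)]
      fun v => g v - Fm m p v := by
    filter_upwards [hkey] with v hv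
    exact hv.symm
  have hA : (fun v : ℝ => g v - Fm m p v) =O[nhds (0:ℝ)] fun v => v ^ (m + 1) :=
    (hO1.add hO2).congr' hkey' (EventuallyEq.refl _ _)
  have htot : (fun v : ℝ => g v - ∑ i ∈ range (m + 1), cm m p i * v ^ i)
      =O[nhds (0:ℝ)] fun v => v ^ (m + 1) := by
    have h := hA.add (hB m p)
    refine h.congr' (Eventually.of_forall fun v => by ring) (EventuallyEq.refl _ _)
  have hqc := coeff_extract hq m (cm m p) htot m le_rfl
  rw [hqc, cm_top]
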